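/- Let U be an h-scattered F_q-subspace of V = F_{q^m}^k (i.e., ⟨U⟩_{F_{q^m}} = V and dim_{F_q}(W ∩ U) ≤ h for every F_{q^m}-subspace W of dimension h). If dim_{F_q} U > ⌊km/(h+1)⌋, then dim_{F_q} U = k. -/

import Mathlib

open Module Submodule

lemma exists_superset_finrank_eq {K V : Type*} [Field K] [AddCommGroup V] [Module K V]
    [FiniteDimensional K V] (d : ℕ) (W : Submodule K V)
    (h1 : finrank K W ≤ d) (h2 : d ≤ finrank K V) :
    ∃ W' : Submodule K V, W ≤ W' ∧ finrank K W' = d := by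
  obtain ⟨g, hg⟩ : ∃ g, d - finrank K W = g := ⟨_, rfl⟩
  induction g generalizing W with
  | zero => exact ⟨W, le_rfl, by omega⟩
  | succ g ih =>
    have hlt : finrank K W < d := by omega
    have hWne : W ≠ ⊤ := by
      intro hW
      rw [hW, finrank_top] at hlt
      omega
    obtain ⟨x, -, hx⟩ := SetLike.exists_of_lt (p := W) (lt_top_iff_ne_top.mpr hWne)
    have hx0 : x ≠ 0 := fun h0 => hx (h0 ▸ W.zero_mem)
    have hWlt : W < W ⊔ K ∙ x := by
      refine lt_of_le_of_ne le_sup_left (fun hEq => hx ?_)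
      rw [hEq]
      exact Submodule.mem_sup_right (mem_span_singleton_self x)
    have hfr : finrank K ↥(W ⊔ K ∙ x) = finrank K W + 1 := by
      have hup : finrank K ↥(W ⊔ K ∙ x) ≤ finrank K W + 1 := by
        have := Submodule.finrank_sup_add_finrank_inf_eq W (K ∙ x)
        rw [finrank_span_singleton hx0] at this
        omega
      have hlow := Submodule.finrank_lt_finrank_of_lt hWlt
      omega
    obtain ⟨W', hle, hr⟩ := ih (W ⊔ K ∙ x) (by omega) (by omega)
    exact ⟨W', le_trans le_sup_left hle, hr⟩

set_option maxHeartbeats 1000000 in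
/-- If `U` is an `h`-scattered `F_q`-subspace of `V = F_{q^m}^k` with
`dim_{F_q} U > ⌊km/(h+1)⌋`, then `dim_{F_q} U = k`. -/
theorem stmt4 (q m k h : ℕ) (hq : ∃ p n : ℕ, p.Prime ∧ 0 < n ∧ q = p ^ n)
    (hm : 2 ≤ m) (hh : 0 < h) (hhk : h < k)
    (F K : Type*) [Field F] [Field K] [Algebra F K]
    [Fintype F] [Fintype K] (hF : Fintype.card F = q) (hcard : Fintype.card K = q ^ m)
    (U : Submodule F (Fin k → K))
    (hspan : Submodule.span K (U : Set (Fin k → K)) = ⊤)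
    (hscatt : ∀ W : Submodule K (Fin k → K), Module.finrank K W = h →
      Module.finrank F ↥(U ⊓ W.restrictScalars F) ≤ h)
    (hdim : k * m / (h + 1) < Module.finrank F U) :
    Module.finrank F U = k := by
  classical
  have hq2 : 2 ≤ q := by
    obtain ⟨p, nn, hp, hnn, rfl⟩ := hq
    calc 2 ≤ p := hp.two_le
    _ = p ^ 1 := (pow_one p).symm
    _ ≤ p ^ nn := Nat.pow_le_pow_right hp.pos hnn
  haveI : Module.Finite F K := Module.finite_iff_finite.mpr inferInstance
  have hFK : finrank F K = m := by
    have h1 : Fintype.card K = Fintype.card F ^ finrank F K := card_eq_pow_finrank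
    rw [hF, hcard] at h1
    exact (Nat.pow_right_injective hq2 h1).symm
  haveI : FiniteDimensional F (Fin k → K) := FiniteDimensional.trans F K (Fin k → K)
  haveI : FiniteDimensional F ↥U := inferInstance
  set n := finrank F ↥U with hn
  let b : Basis (Fin n) F ↥U := Module.finBasis F ↥U
  let T : (Fin n → K) →ₗ[K] (Fin k → K) :=
    Fintype.linearCombination K (fun i => (b i : Fin k → K))
  have hT : ∀ x : Fin n → K, T x = ∑ i, x i • (b i : Fin k → K) := fun x =>
    Fintype.linearCombination_apply K _ x
  -- range of T is everything
  have hbspan : span F (Set.range fun i => (b i : Fin k → K)) = U := by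
    have h1 := b.span_eq
    have h2 : Submodule.map U.subtype (span F (Set.range b)) = U := by
      rw [h1, Submodule.map_top, Submodule.range_subtype]
    rw [Submodule.map_span, ← Set.range_comp] at h2
    exact h2
  have hrange : LinearMap.range T = ⊤ := by
    rw [Fintype.range_linearCombination]
    apply le_antisymm le_top
    rw [← hspan]
    apply span_le.mpr
    intro x hx
    have hx2 : x ∈ span F (Set.range fun i => (b i : Fin k → K)) := by
      rw [hbspan]; exact hx
    exact span_le_restrictScalars F K _ hx2
  have hrn : k + finrank K (LinearMap.ker T) = n := by
    have := LinearMap.finrank_range_add_finrank_ker T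
    rwa [hrange, finrank_top, Module.finrank_fin_fun, Module.finrank_fin_fun] at this
  have hkn : k ≤ n := by omega
  rcases Nat.lt_or_ge k n with hnk | hnk
  · exfalso
    -- KEY: any F-independent family of size ≤ h+1 in U is K-independent
    have core : ∀ u : Fin (h + 1) → ↥U, LinearIndependent F u →
        LinearIndependent K (fun j => (u j : Fin k → K)) := by
      intro u hu
      by_contra hdep
      have hcoe : LinearIndependent F (fun j => (u j : Fin k → K)) :=
        hu.map' U.subtype U.ker_subtype
      have hsple : finrank K ↥(span K (Set.range fun j => (u j : Fin k → K))) ≤ h := by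
        have hle := finrank_range_le_card (R := K) (fun j => (u j : Fin k → K))
        have hne : ¬ (Fintype.card (Fin (h + 1)) =
            (Set.range fun j => (u j : Fin k → K)).finrank K) := fun hc =>
          hdep (linearIndependent_iff_card_eq_finrank_span.mpr hc)
        rw [Fintype.card_fin] at hle hne
        have : (Set.range fun j => (u j : Fin k → K)).finrank K =
            finrank K ↥(span K (Set.range fun j => (u j : Fin k → K))) := rfl
        omega
      obtain ⟨W, hWle, hW⟩ := exists_superset_finrank_eq h
        (span K (Set.range fun j => (u j : Fin k → K))) hsple
        (by rw [Module.finrank_fin_fun]; omega)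
      have hWbound := hscatt W hW
      let v : Fin (h + 1) → ↥(U ⊓ W.restrictScalars F) := fun j =>
        ⟨(u j : Fin k → K), ⟨(u j).2, hWle (subset_span ⟨j, rfl⟩)⟩⟩
      have hv : LinearIndependent F v := by
        apply LinearIndependent.of_comp (U ⊓ W.restrictScalars F).subtype
        exact hcoe
      have hcard := hv.fintype_card_le_finrank
      rw [Fintype.card_fin] at hcard
      omega
    have pad : ∀ (g r : ℕ) (hgr : r + g = h + 1), ∀ u : Fin r → ↥U, LinearIndependent F u →
        ∃ w : Fin (h + 1) → ↥U, LinearIndependent F w ∧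
          ∀ j : Fin r, w (Fin.castLE (by omega) j) = u j := by
      intro g
      induction g with
      | zero =>
        intro r hr u hu
        refine ⟨fun j => u (Fin.cast (by omega) j),
          hu.comp (Fin.cast (by omega)) (Fin.cast_injective _), fun j => ?_⟩
        congr 1
      | succ g ih =>
        intro r hr u hu
        have hrlt : r < finrank F ↥U := by omega
        obtain ⟨x, hx⟩ := exists_linearIndependent_snoc_of_lt_finrank hu hrlt
        obtain ⟨w, hw, hwp⟩ := ih (r + 1) (by omega) (Fin.snoc u x) hx
        refine ⟨w, hw, fun j => ?_⟩
        have h1 := hwp (Fin.castSucc j)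
        rw [Fin.snoc_castSucc] at h1
        rw [← h1]
        congr 1
    have key : ∀ (r : ℕ), r ≤ h + 1 → ∀ u : Fin r → ↥U, LinearIndependent F u →
        LinearIndependent K (fun j => (u j : Fin k → K)) := by
      intro r hr u hu
      obtain ⟨w, hw, hwp⟩ := pad (h + 1 - r) r (by omega) u hu
      have hwK := core w hw
      have hcomp := hwK.comp (Fin.castLE (by omega : r ≤ h + 1))
        (Fin.castLE_injective _)
      have heq : (fun j : Fin r => (u j : Fin k → K)) =
          (fun j : Fin (h + 1) => (w j : Fin k → K)) ∘ (Fin.castLE (by omega)) := by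
        funext j
        simp only [Function.comp_apply]
        rw [hwp j]
      rw [heq]
      exact hcomp
    -- CLAIM: kernel elements with coordinates in a small F-subspace of K vanish
    have hswap : ∀ (c : F) (κ : K) (v : Fin k → K), κ • (c • v) = (c • κ) • v := by
      intro c κ v
      rw [smul_assoc, ← algebraMap_smul K c v, ← algebraMap_smul K c (κ • v),
        smul_smul, smul_smul, mul_comm]
    have claim : ∀ (E : Submodule F K), finrank F ↥E ≤ h + 1 →
        ∀ z : Fin n → K, z ∈ LinearMap.ker T → (∀ i, z i ∈ E) → z = 0 := by
      intro E hE z hzker hzE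
      by_contra hz0
      have hzR : ∀ i, z i ∈ span F (Set.range z) := fun i => subset_span ⟨i, rfl⟩
      have hRE : span F (Set.range z) ≤ E := span_le.mpr (Set.range_subset_iff.mpr hzE)
      have hrle : finrank F ↥(span F (Set.range z)) ≤ h + 1 :=
        le_trans (Submodule.finrank_mono hRE) hE
      have hrpos : 0 < finrank F ↥(span F (Set.range z)) := by
        rcases Nat.eq_zero_or_pos (finrank F ↥(span F (Set.range z))) with h0 | h0
        · exfalso
          have hbot : span F (Set.range z) = ⊥ := by
            rw [← Submodule.finrank_eq_zero (R := F)] at *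
            exact h0
          apply hz0
          funext i
          have hmem := hzR i
          rw [hbot, Submodule.mem_bot] at hmem
          exact hmem
        · exact h0
      set r := finrank F ↥(span F (Set.range z)) with hrdef
      let μ : Basis (Fin r) F ↥(span F (Set.range z)) := Module.finBasis F _
      let a : Fin n → Fin r → F := fun i j => μ.repr ⟨z i, hzR i⟩ j
      have hza : ∀ i, z i = ∑ j, a i j • (μ j : K) := by
        intro i
        have h2 := μ.sum_repr ⟨z i, hzR i⟩
        calc z i = ((⟨z i, hzR i⟩ : ↥(span F (Set.range z))) : K) := rfl
          _ = ↑(∑ j, μ.repr ⟨z i, hzR i⟩ j • μ j) := by rw [h2]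
          _ = ∑ j, a i j • (μ j : K) := by
              rw [AddSubmonoidClass.coe_finset_sum]; simp only [Submodule.coe_smul, a]
      let u : Fin r → ↥U := fun j => ∑ i, a i j • b i
      have hcu : ∀ j, (u j : Fin k → K) = ∑ i, a i j • (b i : Fin k → K) := by
        intro j
        simp [u]
      have hTz : T z = 0 := LinearMap.mem_ker.mp hzker
      rw [hT] at hTz
      have hrel : ∑ j, (μ j : K) • (u j : Fin k → K) = 0 := by
        calc ∑ j, (μ j : K) • (u j : Fin k → K)
            = ∑ j, ∑ i, (μ j : K) • (a i j • (b i : Fin k → K)) := by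
              refine Finset.sum_congr rfl fun j _ => ?_
              rw [hcu j, Finset.smul_sum]
          _ = ∑ i, ∑ j, (μ j : K) • (a i j • (b i : Fin k → K)) := Finset.sum_comm
          _ = ∑ i, (∑ j, a i j • (μ j : K)) • (b i : Fin k → K) := by
              refine Finset.sum_congr rfl fun i _ => ?_
              rw [Finset.sum_smul]
              exact Finset.sum_congr rfl fun j _ => hswap _ _ _
          _ = ∑ i, z i • (b i : Fin k → K) := by
              refine Finset.sum_congr rfl fun i _ => ?_
              rw [← hza i]
          _ = 0 := hTz
      have hui : LinearIndependent F u := by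
        rw [Fintype.linearIndependent_iff]
        intro c hc
        have hsum : ∑ i, (∑ j, c j * a i j) • b i = 0 := by
          rw [← hc]
          calc ∑ i, (∑ j, c j * a i j) • b i
              = ∑ i, ∑ j, (c j * a i j) • b i := by
                refine Finset.sum_congr rfl fun i _ => ?_
                rw [Finset.sum_smul]
            _ = ∑ j, ∑ i, (c j * a i j) • b i := Finset.sum_comm
            _ = ∑ j, c j • u j := by
                refine Finset.sum_congr rfl fun j _ => ?_
                rw [Finset.smul_sum]
                exact Finset.sum_congr rfl fun i _ => (mul_smul _ _ _)
        have hci : ∀ i, (∑ j, c j * a i j) = 0 := fun i =>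
          Fintype.linearIndependent_iff.mp b.linearIndependent _ hsum i
        intro j0
        let f : ↥(span F (Set.range z)) →ₗ[F] F := ∑ j, c j • (μ.coord j)
        have hfz : ∀ (x : K) (hx : x ∈ span F (Set.range z)), f ⟨x, hx⟩ = 0 := by
          intro x hx
          induction hx using Submodule.span_induction with
          | mem x hxs =>
            obtain ⟨i, rfl⟩ := hxs
            have hfv : f ⟨z i, hzR i⟩ = ∑ j, c j * a i j := by
              simp [f, LinearMap.sum_apply, LinearMap.smul_apply, Basis.coord_apply,
                smul_eq_mul, a]
            exact hfv.trans (hci i)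
          | zero => exact map_zero f
          | add x y hxm hym ihx ihy =>
            have hxy : (⟨x + y, add_mem hxm hym⟩ : ↥(span F (Set.range z)))
                = ⟨x, hxm⟩ + ⟨y, hym⟩ := rfl
            rw [hxy, map_add, ihx, ihy, add_zero]
          | smul t x hxm ihx =>
            have htx : (⟨t • x, smul_mem _ t hxm⟩ : ↥(span F (Set.range z)))
                = t • ⟨x, hxm⟩ := rfl
            rw [htx, map_smul, ihx, smul_zero]
        have hfμ : f (μ j0) = c j0 := by
          simp [f, LinearMap.sum_apply, LinearMap.smul_apply, Basis.coord_apply,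
            Basis.repr_self, smul_eq_mul, Finsupp.single_apply]
        have h5 : f (μ j0) = 0 := hfz ((μ j0 : K)) (μ j0).2
        rw [hfμ] at h5
        exact h5
      have hKind := key r hrle u hui
      rw [Fintype.linearIndependent_iff] at hKind
      have hμ0 := hKind (fun j => (μ j : K)) hrel ⟨0, hrpos⟩
      exact μ.ne_zero ⟨0, hrpos⟩ (Subtype.ext hμ0)
    -- Singleton-type bound
    have hZF : finrank F ↥(LinearMap.ker T) = m * (n - k) := by
      have hmul := Module.finrank_mul_finrank F K ↥(LinearMap.ker T)
      rw [hFK] at hmul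
      have h2 : finrank K ↥(LinearMap.ker T) = n - k := by omega
      rw [← hmul, h2]
    set s := m - (h + 1) with hs
    have hbound : finrank F ↥(LinearMap.ker T) ≤ n * s := by
      have hsm : s ≤ m := by omega
      let eK : Basis (Fin m) F K := (Module.finBasis F K).reindex (finCongr hFK)
      let φ : ↥(LinearMap.ker T) →ₗ[F] (Fin n → Fin s → F) :=
        { toFun := fun z => fun i j => eK.repr ((z : Fin n → K) i) (Fin.castLE hsm j)
          map_add' := by
            intro z1 z2
            funext i j
            simp
          map_smul' := by
            intro c z1
            funext i j
            simp }
      have hφapp : ∀ (z : ↥(LinearMap.ker T)) (i : Fin n) (j : Fin s),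
          φ z i j = eK.repr ((z : Fin n → K) i) (Fin.castLE hsm j) := fun _ _ _ => rfl
      have hφ : Function.Injective φ := by
        rw [← LinearMap.ker_eq_bot]
        apply (Submodule.eq_bot_iff _).mpr
        intro z hzφ
        have hzφ0 : ∀ (i : Fin n) (jm : Fin m), jm.1 < s → eK.repr ((z : Fin n → K) i) jm = 0 := by
          intro i jm hjm
          have hcf := congrFun (congrFun (LinearMap.mem_ker.mp hzφ) i) ⟨jm.1, hjm⟩
          rw [hφapp] at hcf
          have hjm_eq : jm = Fin.castLE hsm ⟨jm.1, hjm⟩ := Fin.ext rfl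
          rw [hjm_eq]
          exact hcf
        have hzE : ∀ i, (z : Fin n → K) i ∈ span F (eK '' {jm : Fin m | s ≤ jm.1}) := by
          intro i
          rw [Basis.mem_span_image]
          intro jm hjm
          rw [Finset.mem_coe, Finsupp.mem_support_iff] at hjm
          by_contra hlt
          exact hjm (hzφ0 i jm (by simpa using hlt))
        have hEle : finrank F ↥(span F (eK '' {jm : Fin m | s ≤ jm.1})) ≤ h + 1 := by
          have h1 := finrank_span_le_card (R := F) (eK '' {jm : Fin m | s ≤ jm.1})
          have h2 : (eK '' {jm : Fin m | s ≤ jm.1}).toFinset.card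
              ≤ ({jm : Fin m | s ≤ jm.1} : Set (Fin m)).toFinset.card := by
            rw [Set.toFinset_image]
            exact Finset.card_image_le
          have h3 : ({jm : Fin m | s ≤ jm.1} : Set (Fin m)).toFinset.card ≤ h + 1 := by
            rw [Set.toFinset_card]
            have hinj : Function.Injective
                (fun x : {jm : Fin m | s ≤ jm.1} => (⟨x.1.1 - s, by
                  have h4 := x.1.2
                  have h5 : s ≤ x.1.1 := x.2
                  omega⟩ : Fin (h + 1))) := by
              rintro ⟨⟨v1, hv1⟩, hx1⟩ ⟨⟨v2, hv2⟩, hx2⟩ heq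
              have h6 := congrArg Fin.val heq
              simp only [Set.mem_setOf_eq] at hx1 hx2
              simp only at h6
              apply Subtype.ext
              apply Fin.ext
              simp only
              omega
            have := Fintype.card_le_of_injective _ hinj
            simpa using this
          omega
        have hz0 := claim (span F (eK '' {jm : Fin m | s ≤ jm.1})) hEle
          ((z : Fin n → K)) z.2 hzE
        exact Subtype.ext hz0
      have hle := LinearMap.finrank_le_finrank_of_injective hφ
      calc finrank F ↥(LinearMap.ker T) ≤ finrank F (Fin n → Fin s → F) := hle
        _ = n * s := by
          rw [Module.finrank_pi_fintype F]
          simp [Module.finrank_fintype_fun_eq_card, Finset.sum_const, mul_comm]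
    rw [hZF] at hbound
    rcases le_or_gt (h + 1) m with hm1 | hm1
    · obtain ⟨d, hd⟩ : ∃ d, n = k + d := ⟨n - k, by omega⟩
      obtain ⟨t, ht⟩ : ∃ t, m = (h + 1) + t := ⟨m - (h + 1), by omega⟩
      have hd' : n - k = d := by omega
      have ht' : s = t := by omega
      rw [hd', ht'] at hbound
      have harith : n * (h + 1) ≤ k * m := by nlinarith [hbound, hd, ht]
      have : n ≤ k * m / (h + 1) := Nat.le_div_iff_mul_le (by omega) |>.mpr harith
      omega
    · have hs0 : s = 0 := by omega
      rw [hs0, Nat.mul_zero, Nat.le_zero] at hbound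
      rcases Nat.mul_eq_zero.mp hbound with h0 | h0 <;> omega
  · omega
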